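/- Let (d_i)_{i≥1} be a sequence of positive reals with z := inf_{i≥1} d_i > 0. Then for every x ≥ 0 the series ∑_{i=1}^∞ (i·d_i − x)·∏_{j=1}^i x/(x+d_j) converges and its sum equals x. -/

import Mathlib

/-- If `(d_i)_{i≥1}` are positive reals with positive infimum, then for every `x ≥ 0` the
series `∑_{i=1}^∞ (i·d_i − x)·∏_{j=1}^i x/(x+d_j)` converges with sum `x`. -/
theorem silicosis_series_sum_x (d : ℕ → ℝ) (hd : ∀ i : ℕ, 1 ≤ i → 0 < d i)
    (hz : 0 < ⨅ i : ℕ, d (i + 1)) (x : ℝ) (hx : 0 ≤ x) :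
    HasSum (fun i : ℕ =>
        (((i + 1 : ℕ) : ℝ) * d (i + 1) - x) * ∏ j ∈ Finset.Icc 1 (i + 1), x / (x + d j))
      x := by
  set z := ⨅ i : ℕ, d (i + 1) with hzdef
  have hbdd : BddBelow (Set.range fun i : ℕ => d (i + 1)) :=
    ⟨0, by rintro _ ⟨i, rfl⟩; exact (hd (i + 1) (by omega)).le⟩
  have hzle : ∀ j, 1 ≤ j → z ≤ d j := by
    intro j hj
    obtain ⟨k, rfl⟩ : ∃ k, j = k + 1 := ⟨j - 1, by omega⟩
    exact ciInf_le hbdd k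
  have hxz : 0 < x + z := by linarith
  set r := x / (x + z) with hr
  have hr0 : 0 ≤ r := div_nonneg hx hxz.le
  have hr1 : r < 1 := (div_lt_one hxz).2 (by linarith)
  set Q : ℕ → ℝ := fun n => ∏ j ∈ Finset.Icc 1 n, x / (x + d j) with hQ
  have hfac : ∀ j, 1 ≤ j → 0 ≤ x / (x + d j) := by
    intro j hj
    have := hd j hj
    exact div_nonneg hx (by linarith)
  have hQ0 : ∀ n, 0 ≤ Q n := fun n =>
    Finset.prod_nonneg fun j hj => hfac j (Finset.mem_Icc.1 hj).1
  have hQle : ∀ n, Q n ≤ r ^ n := by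
    intro n
    calc Q n ≤ ∏ _j ∈ Finset.Icc 1 n, r := by
          refine Finset.prod_le_prod (fun j hj => hfac j (Finset.mem_Icc.1 hj).1) ?_
          intro j hj
          have hj1 := (Finset.mem_Icc.1 hj).1
          have h1 := hzle j hj1
          exact div_le_div_of_nonneg_left hx hxz (by linarith)
      _ = r ^ n := by rw [Finset.prod_const, Nat.card_Icc]; norm_num
  have hQsucc : ∀ n, Q (n + 1) = Q n * (x / (x + d (n + 1))) := by
    intro n
    simp only [hQ]
    rw [Finset.prod_Icc_succ_top (by omega : 1 ≤ n + 1)]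
  set a : ℕ → ℝ := fun n => x * ((n : ℝ) + 1) * Q n with ha
  have key : ∀ i : ℕ,
      (((i + 1 : ℕ) : ℝ) * d (i + 1) - x) * Q (i + 1) = a i - a (i + 1) := by
    intro i
    have hdi : 0 < x + d (i + 1) := by have := hd (i + 1) (by omega); linarith
    have hx_Q : x * Q i = (x + d (i + 1)) * Q (i + 1) := by
      rw [hQsucc i]; field_simp
    simp only [ha]
    push_cast
    nlinarith [hx_Q]
  -- bound on |a|
  set g : ℕ → ℝ := fun n => x * ((n : ℝ) + 1) * r ^ n with hg
  have hga : ∀ n, |a n| ≤ g n := by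
    intro n
    rw [abs_of_nonneg (mul_nonneg (by positivity) (hQ0 n))]
    have := hQle n
    have hxn : 0 ≤ x * ((n : ℝ) + 1) := by positivity
    calc x * ((n : ℝ) + 1) * Q n ≤ x * ((n : ℝ) + 1) * r ^ n :=
          mul_le_mul_of_nonneg_left this hxn
      _ = g n := rfl
  have hgsum : Summable g := by
    have h1 : Summable (fun n : ℕ => (n : ℝ) * r ^ n) := by
      have := summable_pow_mul_geometric_of_norm_lt_one 1 (by rwa [Real.norm_eq_abs, abs_of_nonneg hr0] : ‖r‖ < 1)
      simpa using this
    have h2 : Summable (fun n : ℕ => r ^ n) := summable_geometric_of_lt_one hr0 hr1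
    have h3 : Summable (fun n : ℕ => ((n : ℝ) + 1) * r ^ n) := by
      have := h1.add h2
      convert this using 1
      funext n; ring
    simpa only [hg, mul_assoc] using h3.mul_left x
  have hasum : Summable a := by
    refine Summable.of_abs ?_
    exact hgsum.of_nonneg_of_le (fun n => abs_nonneg _) hga
  have ha_to0 : Filter.Tendsto a Filter.atTop (nhds 0) := by
    have hg0 : Filter.Tendsto g Filter.atTop (nhds 0) := hgsum.tendsto_atTop_zero
    refine squeeze_zero (fun n => mul_nonneg (by positivity) (hQ0 n)) ?_ hg0
    intro n
    have := hga n
    calc a n ≤ |a n| := le_abs_self _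
      _ ≤ g n := this
  set f : ℕ → ℝ := fun i =>
    (((i + 1 : ℕ) : ℝ) * d (i + 1) - x) * ∏ j ∈ Finset.Icc 1 (i + 1), x / (x + d j) with hf
  have hfa : ∀ i, f i = a i - a (i + 1) := fun i => key i
  have hfsum : Summable f := by
    have h2 : Summable (fun n => a (n + 1)) := (summable_nat_add_iff 1).2 hasum
    have := hasum.sub h2
    exact this.congr fun i => (hfa i).symm
  rw [hfsum.hasSum_iff_tendsto_nat]
  have hpartial : ∀ n, ∑ i ∈ Finset.range n, f i = a 0 - a n := by
    intro n
    have := Finset.sum_range_sub' a n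
    rw [← this]
    exact Finset.sum_congr rfl fun i _ => hfa i
  have ha0 : a 0 = x := by
    simp only [ha, hQ]
    norm_num
  have hlim : Filter.Tendsto (fun n => x - a n) Filter.atTop (nhds (x - 0)) :=
    tendsto_const_nhds.sub ha_to0
  rw [sub_zero] at hlim
  refine (Filter.tendsto_congr fun n => ?_).1 hlim
  rw [hpartial n, ha0]
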